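/- Let λ > 0, let (α_n)_{n≥0} satisfy 0 < α_n ≤ 1 for all n, and for n ≥ 0 let p(n,t) = (−1)^n ∑_{k=n}^∞ (−λ)^k ∑_{(k_0,…,k_n) ∈ Θ^k_n} t^{∑_{j=0}^n k_j α_j} / Γ(1 + ∑_{j=0}^n k_j α_j). Then for every s > 0 such that s^{α_k} > λ for all 0 ≤ k ≤ n, the Laplace transform of p(n,·) satisfies ∫₀^∞ p(n,t) e^{−st} dt = λ^n s^{α_0 − 1} / ∏_{k=0}^n (s^{α_k} + λ). -/

import Mathlib

open scoped BigOperators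

/-- Riemann–Liouville fractional integral of order `α`. -/
noncomputable def rlInt (α : ℝ) (f : ℝ → ℝ) (t : ℝ) : ℝ :=
  (1 / Real.Gamma α) * ∫ s in (0:ℝ)..t, (t - s) ^ (α - 1) * f s

/-- `Theta n k` is the set of tuples `(k_0, …, k_n)` of nonnegative integers with
`k_0 + ⋯ + k_n = k` and `k_j ≥ 1` for `1 ≤ j ≤ n`. -/
def Theta (n k : ℕ) : Finset (Fin (n + 1) → ℕ) :=
  (Finset.Nat.antidiagonalTuple (n + 1) k).filter
    (fun κ => ∀ j : Fin (n + 1), 1 ≤ j.val → 1 ≤ κ j)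


open MeasureTheory

def Phi (n k : ℕ) : Finset (Fin n → ℕ) :=
  (Finset.Nat.antidiagonalTuple n k).filter (fun κ => ∀ j, 1 ≤ κ j)

lemma mem_Phi {n k : ℕ} {κ : Fin n → ℕ} :
    κ ∈ Phi n k ↔ (∑ j, κ j = k ∧ ∀ j, 1 ≤ κ j) := by
  simp [Phi, Finset.Nat.mem_antidiagonalTuple]

lemma mem_Theta {n k : ℕ} {κ : Fin (n+1) → ℕ} :
    κ ∈ Theta n k ↔ (∑ j, κ j = k ∧ ∀ j : Fin (n+1), 1 ≤ j.val → 1 ≤ κ j) := by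
  simp [Theta, Finset.Nat.mem_antidiagonalTuple]

lemma sum_Phi_succ {n k : ℕ} (f : (Fin (n+1) → ℕ) → ℝ) :
    ∑ κ ∈ Phi (n+1) k, f κ
      = ∑ ml ∈ Finset.HasAntidiagonal.antidiagonal k,
          (if 1 ≤ ml.1 then ∑ κ' ∈ Phi n ml.2, f (Fin.cons ml.1 κ') else 0) := by
  rw [Finset.sum_ite, Finset.sum_const_zero, add_zero, Finset.sum_sigma']
  refine Finset.sum_nbij'
    (fun κ => (⟨(κ 0, ∑ j, Fin.tail κ j), Fin.tail κ⟩ :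
      (_ : ℕ × ℕ) × (Fin n → ℕ)))
    (fun p => Fin.cons p.1.1 p.2) ?_ ?_ ?_ ?_ ?_
  · intro κ hκ
    rw [mem_Phi] at hκ
    simp only [Finset.mem_sigma, Finset.mem_filter, Finset.HasAntidiagonal.mem_antidiagonal]
    refine ⟨⟨?_, hκ.2 0⟩, ?_⟩
    · rw [← hκ.1, Fin.sum_univ_succ]; rfl
    · rw [mem_Phi]
      exact ⟨rfl, fun j => hκ.2 j.succ⟩
  · rintro ⟨⟨m, l⟩, κ'⟩ hp
    simp only [Finset.mem_sigma, Finset.mem_filter, Finset.HasAntidiagonal.mem_antidiagonal] at hp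
    obtain ⟨⟨hml, hm⟩, hκ'⟩ := hp
    rw [mem_Phi] at hκ' ⊢
    constructor
    · rw [Fin.sum_cons, hκ'.1, hml]
    · intro j
      refine Fin.cases ?_ ?_ j
      · simpa using hm
      · intro i; simpa using hκ'.2 i
  · intro κ hκ
    exact Fin.cons_self_tail κ
  · rintro ⟨⟨m, l⟩, κ'⟩ hp
    simp only [Finset.mem_sigma, Finset.mem_filter, Finset.HasAntidiagonal.mem_antidiagonal] at hp
    have h2 : Fin.tail (Fin.cons (α := fun _ => ℕ) m κ') = κ' := Fin.tail_cons _ _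
    rw [mem_Phi] at hp
    ext <;> simp [h2, hp.2.1]
  · intro κ hκ
    simp [Fin.cons_self_tail κ]

lemma sum_Theta_succ {n k : ℕ} (f : (Fin (n+1) → ℕ) → ℝ) :
    ∑ κ ∈ Theta n k, f κ
      = ∑ ml ∈ Finset.HasAntidiagonal.antidiagonal k,
          ∑ κ' ∈ Phi n ml.2, f (Fin.cons ml.1 κ') := by
  rw [Finset.sum_sigma']
  refine Finset.sum_nbij'
    (fun κ => (⟨(κ 0, ∑ j, Fin.tail κ j), Fin.tail κ⟩ :
      (_ : ℕ × ℕ) × (Fin n → ℕ)))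
    (fun p => Fin.cons p.1.1 p.2) ?_ ?_ ?_ ?_ ?_
  · intro κ hκ
    rw [mem_Theta] at hκ
    simp only [Finset.mem_sigma, Finset.HasAntidiagonal.mem_antidiagonal]
    refine ⟨?_, ?_⟩
    · rw [← hκ.1, Fin.sum_univ_succ]; rfl
    · rw [mem_Phi]
      exact ⟨rfl, fun j => hκ.2 j.succ (by simp)⟩
  · rintro ⟨⟨m, l⟩, κ'⟩ hp
    simp only [Finset.mem_sigma, Finset.HasAntidiagonal.mem_antidiagonal] at hp
    obtain ⟨hml, hκ'⟩ := hp
    rw [mem_Phi] at hκ'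
    rw [mem_Theta]
    constructor
    · rw [Fin.sum_cons, hκ'.1, hml]
    · intro j hj
      have hj0 : j ≠ 0 := by
        intro h; rw [h] at hj; simp at hj
      obtain ⟨i, rfl⟩ := Fin.exists_succ_eq.mpr hj0
      simpa using hκ'.2 i
  · intro κ hκ
    exact Fin.cons_self_tail κ
  · rintro ⟨⟨m, l⟩, κ'⟩ hp
    simp only [Finset.mem_sigma, Finset.HasAntidiagonal.mem_antidiagonal] at hp
    have h2 : Fin.tail (Fin.cons (α := fun _ => ℕ) m κ') = κ' := Fin.tail_cons _ _
    rw [mem_Phi] at hp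
    ext <;> simp [h2, hp.2.1]
  · intro κ hκ
    simp [Fin.cons_self_tail κ]

lemma geom_aux {z : ℝ} (hz : |z| < 1) :
    Summable (fun m : ℕ => ‖(if 1 ≤ m then z ^ m else 0 : ℝ)‖) ∧
    ∑' m : ℕ, (if 1 ≤ m then z ^ m else 0 : ℝ) = z / (1 - z) := by
  have hz' : ‖z‖ < 1 := by rwa [Real.norm_eq_abs]
  have hsum : Summable (fun m : ℕ => ‖(if 1 ≤ m then z ^ m else 0 : ℝ)‖) := by
    refine Summable.of_nonneg_of_le (fun m => norm_nonneg _) (fun m => ?_)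
      (summable_norm_geometric_of_norm_lt_one hz')
    by_cases h : 1 ≤ m <;> simp [h]
  refine ⟨hsum, ?_⟩
  have h1 : ∑' m : ℕ, (if 1 ≤ m then z ^ m else 0 : ℝ)
      = (if 1 ≤ (0:ℕ) then z ^ 0 else 0) + ∑' m : ℕ, (if 1 ≤ m + 1 then z ^ (m+1) else 0 : ℝ) :=
    hsum.of_norm.tsum_eq_zero_add
  rw [h1]
  simp only [Nat.not_succ_le_zero, if_false, le_add_iff_nonneg_left, Nat.zero_le, if_true,
    zero_add, pow_succ']
  rw [tsum_mul_left, tsum_geometric_of_norm_lt_one hz']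
  field_simp
  norm_num

lemma Phi_tsum (n : ℕ) (z : ℕ → ℝ) (hz : ∀ j < n, |z j| < 1) :
    Summable (fun k => ‖∑ κ ∈ Phi n k, ∏ j : Fin n, z j.val ^ κ j‖) ∧
    ∑' k, ∑ κ ∈ Phi n k, ∏ j : Fin n, z j.val ^ κ j
      = ∏ j ∈ Finset.range n, (z j / (1 - z j)) := by
  induction n generalizing z with
  | zero =>
    have h0 : ∀ k, (∑ κ ∈ Phi 0 k, ∏ j : Fin 0, z j.val ^ κ j)
        = (if k = 0 then (1:ℝ) else 0) := by
      intro k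
      cases k with
      | zero => simp [Phi]
      | succ k => simp [Phi]
    simp only [h0]
    constructor
    · refine summable_of_ne_finset_zero (s := {0}) (fun k hk => ?_)
      simp only [Finset.mem_singleton] at hk
      simp [hk]
    · rw [tsum_ite_eq]
      simp
  | succ n ih =>
    have hz0 : |z 0| < 1 := hz 0 (Nat.succ_pos n)
    have hzs : ∀ j < n, |z (j+1)| < 1 := fun j hj => hz (j+1) (by omega)
    obtain ⟨hBs, hBt⟩ := ih (fun j => z (j+1)) hzs
    obtain ⟨hgs, hgt⟩ := geom_aux hz0
    set g : ℕ → ℝ := fun m => if 1 ≤ m then z 0 ^ m else 0 with hg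
    set B : ℕ → ℝ := fun l => ∑ κ ∈ Phi n l, ∏ j : Fin n, z (j.val+1) ^ κ j with hB
    have key : ∀ k, (∑ κ ∈ Phi (n+1) k, ∏ j : Fin (n+1), z j.val ^ κ j)
        = ∑ ml ∈ Finset.HasAntidiagonal.antidiagonal k, g ml.1 * B ml.2 := by
      intro k
      rw [sum_Phi_succ (fun κ => ∏ j : Fin (n+1), z j.val ^ κ j)]
      refine Finset.sum_congr rfl (fun ml _ => ?_)
      have hprod : ∀ (m : ℕ) (κ' : Fin n → ℕ),
          (∏ j : Fin (n+1), z j.val ^ (Fin.cons (α := fun _ => ℕ) m κ') j)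
            = z 0 ^ m * ∏ j : Fin n, z (j.val+1) ^ κ' j := by
        intro m κ'
        rw [Fin.prod_univ_succ]
        simp
      by_cases h : 1 ≤ ml.1
      · simp only [h, if_true, hg, hB]
        rw [Finset.mul_sum]
        exact Finset.sum_congr rfl (fun κ' _ => by rw [hprod])
      · simp [h, hg]
    simp only [key]
    constructor
    · exact summable_norm_sum_mul_antidiagonal_of_summable_norm hgs hBs
    · rw [← tsum_mul_tsum_eq_tsum_sum_antidiagonal_of_summable_norm hgs hBs, hgt, hBt,
        Finset.prod_range_succ']
      ring

lemma Theta_tsum (n : ℕ) (z : ℕ → ℝ) (hz : ∀ j < n + 1, |z j| < 1) :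
    Summable (fun k => ‖∑ κ ∈ Theta n k, ∏ j : Fin (n+1), z j.val ^ κ j‖) ∧
    ∑' k, ∑ κ ∈ Theta n k, ∏ j : Fin (n+1), z j.val ^ κ j
      = (1 - z 0)⁻¹ * ∏ j ∈ Finset.range n, (z (j+1) / (1 - z (j+1))) := by
  have hz0 : ‖z 0‖ < 1 := by rw [Real.norm_eq_abs]; exact hz 0 (Nat.succ_pos n)
  have hzs : ∀ j < n, |z (j+1)| < 1 := fun j hj => hz (j+1) (by omega)
  obtain ⟨hBs, hBt⟩ := Phi_tsum n (fun j => z (j+1)) hzs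
  have hgs : Summable (fun m : ℕ => ‖z 0 ^ m‖) := summable_norm_geometric_of_norm_lt_one hz0
  set B : ℕ → ℝ := fun l => ∑ κ ∈ Phi n l, ∏ j : Fin n, z (j.val+1) ^ κ j with hB
  have key : ∀ k, (∑ κ ∈ Theta n k, ∏ j : Fin (n+1), z j.val ^ κ j)
      = ∑ ml ∈ Finset.HasAntidiagonal.antidiagonal k, z 0 ^ ml.1 * B ml.2 := by
    intro k
    rw [sum_Theta_succ (fun κ => ∏ j : Fin (n+1), z j.val ^ κ j)]
    refine Finset.sum_congr rfl (fun ml _ => ?_)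
    rw [hB, Finset.mul_sum]
    refine Finset.sum_congr rfl (fun κ' _ => ?_)
    rw [Fin.prod_univ_succ]
    simp
  simp only [key]
  constructor
  · exact summable_norm_sum_mul_antidiagonal_of_summable_norm hgs hBs
  · rw [← tsum_mul_tsum_eq_tsum_sum_antidiagonal_of_summable_norm hgs hBs,
      tsum_geometric_of_norm_lt_one hz0, hBt]
open MeasureTheory

lemma integrableOn_rpow_exp {a s : ℝ} (ha : 0 ≤ a) (hs : 0 < s) :
    IntegrableOn (fun t => t ^ a * Real.exp (-(s * t))) (Set.Ioi (0:ℝ)) := by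
  have := integrableOn_rpow_mul_exp_neg_mul_rpow (by linarith : (-1:ℝ) < a) (by norm_num : (0:ℝ) < 1) hs
  refine this.congr_fun (fun t ht => ?_) measurableSet_Ioi
  beta_reduce; rw [Real.rpow_one, neg_mul]

lemma integral_rpow_exp {a s : ℝ} (ha : 0 ≤ a) (hs : 0 < s) :
    ∫ t in Set.Ioi (0:ℝ), t ^ a * Real.exp (-(s * t))
      = Real.Gamma (a + 1) * (1/s) ^ (a + 1) := by
  have h := Real.integral_rpow_mul_exp_neg_mul_Ioi (by linarith : (0:ℝ) < a + 1) hs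
  simp only [add_sub_cancel_right] at h
  rw [h]; ring

noncomputable def aA (α : ℕ → ℝ) {n : ℕ} (κ : Fin (n+1) → ℕ) : ℝ :=
  ∑ j, (κ j : ℝ) * α j.val

noncomputable def aG (α : ℕ → ℝ) (s : ℝ) {n : ℕ} (κ : Fin (n+1) → ℕ) (t : ℝ) : ℝ :=
  t ^ aA α κ / Real.Gamma (1 + aA α κ) * Real.exp (-(s*t))

noncomputable def aF (lam : ℝ) (α : ℕ → ℝ) (s : ℝ) (n k : ℕ) (t : ℝ) : ℝ :=
  ((-1:ℝ)^n * (-lam)^k) * ∑ κ ∈ Theta n k, aG α s κ t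

section Aux
variable {lam : ℝ} {α : ℕ → ℝ} {n : ℕ} {s : ℝ}

lemma aA_nonneg (hα : ∀ m, 0 < α m ∧ α m ≤ 1) (κ : Fin (n+1) → ℕ) : 0 ≤ aA α κ :=
  Finset.sum_nonneg (fun j _ => mul_nonneg (Nat.cast_nonneg _) (hα j.val).1.le)

lemma aGamma_pos (hα : ∀ m, 0 < α m ∧ α m ≤ 1) (κ : Fin (n+1) → ℕ) : 0 < Real.Gamma (1 + aA α κ) :=
  Real.Gamma_pos_of_pos (by linarith [aA_nonneg hα κ])

lemma aG_int (hα : ∀ m, 0 < α m ∧ α m ≤ 1) (hs : 0 < s) (κ : Fin (n+1) → ℕ) : IntegrableOn (aG α s κ) (Set.Ioi (0:ℝ)) := by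
  have h := (integrableOn_rpow_exp (aA_nonneg hα κ) hs).div_const (Real.Gamma (1 + aA α κ))
  refine IntegrableOn.congr_fun h (fun t ht => ?_) measurableSet_Ioi
  simp only [aG, div_mul_eq_mul_div]

lemma aPow (hs : 0 < s) (κ : Fin (n+1) → ℕ) :
    (1/s) ^ (aA α κ + 1) = s⁻¹ * ∏ j : Fin (n+1), (s ^ (-α j.val)) ^ (κ j) := by
  have h1s : (0:ℝ) < 1/s := by positivity
  rw [Real.rpow_add_one (by positivity : (1:ℝ)/s ≠ 0), aA,
    Real.rpow_sum_of_pos h1s, mul_comm, one_div]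
  congr 1
  refine Finset.prod_congr rfl (fun j _ => ?_)
  rw [mul_comm ((κ j : ℝ)) (α j.val), Real.rpow_mul (inv_nonneg.mpr hs.le),
    Real.rpow_natCast, Real.inv_rpow hs.le, ← Real.rpow_neg hs.le]

lemma aG_val (hα : ∀ m, 0 < α m ∧ α m ≤ 1) (hs : 0 < s) (κ : Fin (n+1) → ℕ) :
    ∫ t in Set.Ioi (0:ℝ), aG α s κ t
      = s⁻¹ * ∏ j : Fin (n+1), (s ^ (-α j.val)) ^ (κ j) := by
  have h1 : ∫ t in Set.Ioi (0:ℝ), aG α s κ t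
      = (∫ t in Set.Ioi (0:ℝ), t ^ aA α κ * Real.exp (-(s * t))) / Real.Gamma (1 + aA α κ) := by
    rw [← integral_div]
    refine setIntegral_congr_fun measurableSet_Ioi (fun t ht => ?_)
    simp only [aG]; ring
  rw [h1, integral_rpow_exp (aA_nonneg hα κ) hs,
    show Real.Gamma (aA α κ + 1) = Real.Gamma (1 + aA α κ) by rw [add_comm],
    mul_comm, mul_div_assoc, div_self (aGamma_pos hα κ).ne', mul_one]
  exact aPow hs κ

lemma aCombine (c : ℝ) (k : ℕ) (κ : Fin (n+1) → ℕ) (hκ : κ ∈ Theta n k) :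
    c ^ k * ∏ j : Fin (n+1), (s ^ (-α j.val)) ^ (κ j)
      = ∏ j : Fin (n+1), (c * s ^ (-α j.val)) ^ (κ j) := by
  rw [mem_Theta] at hκ
  rw [← hκ.1, ← Finset.prod_pow_eq_pow_sum, ← Finset.prod_mul_distrib]
  exact Finset.prod_congr rfl (fun j _ => (mul_pow _ _ _).symm)

lemma aF_int (hα : ∀ m, 0 < α m ∧ α m ≤ 1) (hs : 0 < s) (k : ℕ) : Integrable (aF lam α s n k) (volume.restrict (Set.Ioi (0:ℝ))) := by
  have : IntegrableOn (fun t => ((-1:ℝ)^n * (-lam)^k) * ∑ κ ∈ Theta n k, aG α s κ t)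
      (Set.Ioi (0:ℝ)) := (integrable_finset_sum _ (fun κ _ => aG_int hα hs κ)).const_mul _
  exact this

lemma aF_val (hα : ∀ m, 0 < α m ∧ α m ≤ 1) (hs : 0 < s) (k : ℕ) : ∫ t in Set.Ioi (0:ℝ), aF lam α s n k t
    = ((-1:ℝ)^n * s⁻¹) *
        ∑ κ ∈ Theta n k, ∏ j : Fin (n+1), ((-lam) * s ^ (-α j.val)) ^ κ j := by
  simp only [aF]
  rw [integral_const_mul, integral_finset_sum _ (fun κ _ => aG_int hα hs κ)]
  simp only [aG_val hα hs]
  rw [Finset.mul_sum, Finset.mul_sum]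
  refine Finset.sum_congr rfl (fun κ hκ => ?_)
  rw [← aCombine (-lam) k κ hκ]
  ring

lemma aF_norm_bound (hlam : 0 < lam) (hα : ∀ m, 0 < α m ∧ α m ≤ 1) (hs : 0 < s) (k : ℕ) :
    (∫ t in Set.Ioi (0:ℝ), ‖aF lam α s n k t‖)
      ≤ s⁻¹ * ‖∑ κ ∈ Theta n k, ∏ j : Fin (n+1), (lam * s ^ (-α j.val)) ^ κ j‖ := by
  have hDomInt : IntegrableOn (fun t => lam ^ k * ∑ κ ∈ Theta n k, aG α s κ t)
      (Set.Ioi (0:ℝ)) := (integrable_finset_sum _ (fun κ _ => aG_int hα hs κ)).const_mul _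
  have hptw : ∀ t ∈ Set.Ioi (0:ℝ), ‖aF lam α s n k t‖
      ≤ lam ^ k * ∑ κ ∈ Theta n k, aG α s κ t := by
    intro t ht
    have hnorm : ‖(-1:ℝ)^n * (-lam)^k‖ = lam ^ k := by
      rw [norm_mul, norm_pow, norm_pow, norm_neg, norm_one, one_pow, one_mul,
        norm_neg, Real.norm_of_nonneg hlam.le]
    have hGnn : ∀ κ ∈ Theta n k, 0 ≤ aG α s κ t := by
      intro κ _
      have ht' : (0:ℝ) ≤ t := (Set.mem_Ioi.mp ht).le
      have := (aGamma_pos hα (n := n) κ)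
      simp only [aG]
      positivity
    calc ‖aF lam α s n k t‖
        = ‖(-1:ℝ)^n * (-lam)^k‖ * ‖∑ κ ∈ Theta n k, aG α s κ t‖ := by
          simp only [aF]; rw [norm_mul]
      _ ≤ lam ^ k * ∑ κ ∈ Theta n k, aG α s κ t := by
          rw [hnorm]
          refine mul_le_mul_of_nonneg_left ?_ (by positivity)
          calc ‖∑ κ ∈ Theta n k, aG α s κ t‖
              ≤ ∑ κ ∈ Theta n k, ‖aG α s κ t‖ := norm_sum_le _ _
            _ = ∑ κ ∈ Theta n k, aG α s κ t :=
              Finset.sum_congr rfl (fun κ hκ => Real.norm_of_nonneg (hGnn κ hκ))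
  calc (∫ t in Set.Ioi (0:ℝ), ‖aF lam α s n k t‖)
      ≤ ∫ t in Set.Ioi (0:ℝ), lam ^ k * ∑ κ ∈ Theta n k, aG α s κ t :=
        setIntegral_mono_on (aF_int hα hs k).norm hDomInt measurableSet_Ioi hptw
    _ = s⁻¹ * ∑ κ ∈ Theta n k, ∏ j : Fin (n+1), (lam * s ^ (-α j.val)) ^ κ j := by
        rw [integral_const_mul, integral_finset_sum _ (fun κ _ => aG_int hα hs κ)]
        simp only [aG_val hα hs]
        rw [Finset.mul_sum, Finset.mul_sum]
        refine Finset.sum_congr rfl (fun κ hκ => ?_)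
        rw [← aCombine lam k κ hκ]
        ring
    _ ≤ s⁻¹ * ‖∑ κ ∈ Theta n k, ∏ j : Fin (n+1), (lam * s ^ (-α j.val)) ^ κ j‖ :=
        mul_le_mul_of_nonneg_left (le_abs_self _) (by positivity)

end Aux

/-- The state probabilities of SDTFPP-I (note that `Theta n k = ∅` for `k < n`,
so the series over all `k : ℕ` agrees with the series starting at `k = n`). -/
noncomputable def pI (lam : ℝ) (α : ℕ → ℝ) (n : ℕ) (t : ℝ) : ℝ :=
  (-1 : ℝ) ^ n * ∑' k : ℕ, (-lam) ^ k *
    ∑ κ ∈ Theta n k,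
      t ^ (∑ j, (κ j : ℝ) * α j.val) / Real.Gamma (1 + ∑ j, (κ j : ℝ) * α j.val)


lemma pI_eq_tsum_aF (lam : ℝ) (α : ℕ → ℝ) (n : ℕ) (s t : ℝ) :
    pI lam α n t * Real.exp (-(s*t)) = ∑' k, aF lam α s n k t := by
  rw [pI]
  rw [← tsum_mul_left, ← tsum_mul_right]
  refine tsum_congr (fun k => ?_)
  simp only [aF, aG, aA]
  rw [← Finset.sum_mul]
  ring

/-- Laplace transform of the state probabilities of SDTFPP-I. -/
theorem sdtfppI_laplace_transform (lam : ℝ) (hlam : 0 < lam)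
    (α : ℕ → ℝ) (hα : ∀ m, 0 < α m ∧ α m ≤ 1)
    (n : ℕ) (s : ℝ) (hs : 0 < s) (hsk : ∀ k ≤ n, lam < s ^ α k) :
    ∫ t in Set.Ioi (0:ℝ), pI lam α n t * Real.exp (-(s * t))
      = lam ^ n * s ^ (α 0 - 1) / ∏ k ∈ Finset.range (n + 1), (s ^ α k + lam) := by
  have hupos : ∀ m, 0 < s ^ α m := fun m => Real.rpow_pos_of_pos hs _
  have hu : ∀ m, s ^ (-α m) = (s ^ α m)⁻¹ := fun m => Real.rpow_neg hs.le _
  have hw1 : ∀ m < n + 1, |lam * s ^ (-α m)| < 1 := by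
    intro m hm
    rw [abs_of_pos (mul_pos hlam (Real.rpow_pos_of_pos hs _)), hu m,
      ← div_eq_mul_inv, div_lt_one (hupos m)]
    exact hsk m (by omega)
  have hz1 : ∀ m < n + 1, |(-lam) * s ^ (-α m)| < 1 := by
    intro m hm
    rw [show (-lam) * s ^ (-α m) = -(lam * s ^ (-α m)) by ring, abs_neg]
    exact hw1 m hm
  have hw_abs := Theta_tsum n (fun m => lam * s ^ (-α m)) hw1
  have hz_abs := Theta_tsum n (fun m => (-lam) * s ^ (-α m)) hz1
  have hFnorm : Summable fun k => ∫ t in Set.Ioi (0:ℝ), ‖aF lam α s n k t‖ := by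
    refine Summable.of_nonneg_of_le
      (fun k => integral_nonneg (fun t => norm_nonneg _))
      (fun k => aF_norm_bound hlam hα hs k) (hw_abs.1.mul_left _)
  calc ∫ t in Set.Ioi (0:ℝ), pI lam α n t * Real.exp (-(s * t))
      = ∫ t in Set.Ioi (0:ℝ), ∑' k, aF lam α s n k t :=
        setIntegral_congr_fun measurableSet_Ioi (fun t _ => pI_eq_tsum_aF lam α n s t)
    _ = ∑' k, ∫ t in Set.Ioi (0:ℝ), aF lam α s n k t :=
        (integral_tsum_of_summable_integral_norm (fun k => aF_int hα hs k) hFnorm).symm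
    _ = ((-1:ℝ)^n * s⁻¹) * ∑' k, ∑ κ ∈ Theta n k,
          ∏ j : Fin (n+1), ((-lam) * s ^ (-α j.val)) ^ κ j := by
        simp only [aF_val hα hs]
        exact tsum_mul_left
    _ = ((-1:ℝ)^n * s⁻¹) *
          ((1 - (-lam) * s ^ (-α 0))⁻¹ *
            ∏ j ∈ Finset.range n,
              ((-lam) * s ^ (-α (j+1)) / (1 - (-lam) * s ^ (-α (j+1))))) := by
        rw [hz_abs.2]
    _ = lam ^ n * s ^ (α 0 - 1) / ∏ k ∈ Finset.range (n + 1), (s ^ α k + lam) := by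
        have hD : ∀ m, (0:ℝ) < s ^ α m + lam := fun m => add_pos (hupos m) hlam
        have hfrac : ∀ m, (-lam) * s ^ (-α m) / (1 - (-lam) * s ^ (-α m))
            = (-1) * (lam / (s ^ α m + lam)) := by
          intro m
          rw [hu m]
          have h1 : s ^ α m ≠ 0 := (hupos m).ne'
          have h2 : s ^ α m + lam ≠ 0 := (hD m).ne'
          field_simp
          rw [sub_neg_eq_add, div_self h2]
        have hinv : (1 - (-lam) * s ^ (-α 0))⁻¹ = s ^ α 0 / (s ^ α 0 + lam) := by
          have h0 : 1 - (-lam) * s ^ (-α 0) = (s ^ α 0 + lam) / (s ^ α 0) := by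
            rw [hu 0]
            field_simp
            ring
          rw [h0, inv_div]
        rw [hinv]
        simp only [hfrac]
        rw [Finset.prod_mul_distrib, Finset.prod_const, Finset.prod_div_distrib,
          Finset.prod_const]
        have hsign : ((-1:ℝ)^n) * ((-1:ℝ)^n) = 1 := by
          rw [← mul_pow]; norm_num
        have hprodpos : (0:ℝ) < ∏ j ∈ Finset.range n, (s ^ α (j+1) + lam) :=
          Finset.prod_pos (fun j _ => hD (j+1))
        have hsplit : ∏ k ∈ Finset.range (n+1), (s ^ α k + lam)
            = (∏ j ∈ Finset.range n, (s ^ α (j+1) + lam)) * (s ^ α 0 + lam) :=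
          Finset.prod_range_succ' _ n
        have hrpow : s ^ (α 0 - 1) = s ^ α 0 / s := by
          rw [Real.rpow_sub hs, Real.rpow_one]
        rw [hsplit, hrpow]
        field_simp
        ring_nf
        rw [Finset.card_range, mul_assoc, hsign]
        ring
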